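/- arXiv:1612.05745 — 8 statements merged into one kernel-verified Lean document; each statement's English description precedes it below -/
import Mathlib

section
/- Let M be an R-module such that M_p is a free R_p-module for every prime ideal p (M is locally free). If p ⊆ q are prime ideals of R, then the rank of M_p over R_p equals the rank of M_q over R_q. -/
/-- If `M` is a locally free `R`-module (all localizations at primes are free) and `p ⊆ q`
are prime ideals, then the rank of `M_p` over `R_p` equals the rank of `M_q` over `R_q`. -/
theorem stmt3 {R M : Type*} [CommRing R] [AddCommGroup M] [Module R M]
    (hfree : ∀ (p : Ideal R) (_ : p.IsPrime),
      letI := ‹p.IsPrime›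
      Module.Free (Localization.AtPrime p) (LocalizedModule p.primeCompl M))
    (p q : Ideal R) [hp : p.IsPrime] [hq : q.IsPrime] (hpq : p ≤ q) :
    Module.rank (Localization.AtPrime p) (LocalizedModule p.primeCompl M) =
      Module.rank (Localization.AtPrime q) (LocalizedModule q.primeCompl M) := by
  have hfq : Module.Free (Localization.AtPrime q) (LocalizedModule q.primeCompl M) := hfree q hq
  have hle : q.primeCompl ≤ p.primeCompl := fun x hx hxp => hx (hpq hxp)
  set A := Localization.AtPrime q
  set N := LocalizedModule q.primeCompl M
  set Rₚ := Localization.AtPrime p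
  set Mₚ := LocalizedModule p.primeCompl M
  letI : Algebra A Rₚ :=
    IsLocalization.localizationAlgebraOfSubmonoidLe _ _ q.primeCompl p.primeCompl hle
  haveI : IsScalarTower R A Rₚ :=
    IsLocalization.localization_isScalarTower_of_submonoid_le ..
  haveI : IsLocalization (Submonoid.map (algebraMap R A) p.primeCompl) Rₚ :=
    IsLocalization.isLocalization_of_submonoid_le A Rₚ _ _ hle
  letI : Module A Mₚ := Module.compHom Mₚ (algebraMap A Rₚ)
  haveI : IsScalarTower R A Mₚ :=
    ⟨fun r r' m ↦ show algebraMap _ Rₚ (r • r') • m = _ by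
      simp [Algebra.smul_def, ← IsScalarTower.algebraMap_apply, mul_smul]; rfl⟩
  haveI : IsScalarTower A Rₚ Mₚ :=
    ⟨fun r r' m ↦ show _ = algebraMap _ Rₚ r • _ by rw [← mul_smul (algebraMap A Rₚ r) r' m, ← Algebra.smul_def]⟩
  let l := (IsLocalizedModule.liftOfLE _ _ hle (LocalizedModule.mkLinearMap q.primeCompl M)
    (LocalizedModule.mkLinearMap p.primeCompl M)).extendScalarsOfIsLocalization q.primeCompl A
  haveI : IsLocalizedModule p.primeCompl (l.restrictScalars R) :=
    inferInstanceAs (IsLocalizedModule p.primeCompl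
      (IsLocalizedModule.liftOfLE _ _ hle (LocalizedModule.mkLinearMap q.primeCompl M)
      (LocalizedModule.mkLinearMap p.primeCompl M)))
  haveI : IsLocalizedModule (Algebra.algebraMapSubmonoid A p.primeCompl) l :=
    IsLocalizedModule.of_restrictScalars p.primeCompl ..
  haveI : IsLocalizedModule (Submonoid.map (algebraMap R A) p.primeCompl) l := ‹_›
  haveI : Nontrivial Rₚ := inferInstance
  have key := Module.lift_rank_of_isLocalizedModule_of_free Rₚ
    (Submonoid.map (algebraMap R A) p.primeCompl) l
  exact Cardinal.lift_injective key
end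

section
/- If M is an R-module such that M_p is free over R_p for every prime p, then the support of M is stable under generalization: if p ⊆ q are primes and M_q ≠ 0, then M_p ≠ 0. -/
/-- If `M` is a locally free `R`-module, then its support is stable under generalization:
if `p ⊆ q` are primes and `M_q ≠ 0`, then `M_p ≠ 0`. -/
theorem stmt5 {R M : Type*} [CommRing R] [AddCommGroup M] [Module R M]
    (hfree : ∀ (p : Ideal R) (_ : p.IsPrime),
      letI := ‹p.IsPrime›
      Module.Free (Localization.AtPrime p) (LocalizedModule p.primeCompl M))
    (p q : Ideal R) [p.IsPrime] [q.IsPrime] (hpq : p ≤ q)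
    (hq : Nontrivial (LocalizedModule q.primeCompl M)) :
    Nontrivial (LocalizedModule p.primeCompl M) := by
  haveI := hfree q ‹q.IsPrime›
  set Rq := Localization.AtPrime q
  let B := Module.Free.chooseBasis Rq (LocalizedModule q.primeCompl M)
  haveI : Nonempty (Module.Free.ChooseBasisIndex Rq (LocalizedModule q.primeCompl M)) :=
    B.index_nonempty
  obtain ⟨i⟩ := this
  obtain ⟨m, u, hmu⟩ : ∃ (m : M) (u : q.primeCompl),
      LocalizedModule.mk m u = B i :=
    LocalizedModule.induction_on (fun m u => ⟨m, u, rfl⟩) (B i)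
  -- claim : mk m 1 ≠ 0 in M_p
  by_contra hcon
  have hsub : Subsingleton (LocalizedModule p.primeCompl M) :=
    not_nontrivial_iff_subsingleton.mp hcon
  have h0 : (LocalizedModule.mk m 1 : LocalizedModule p.primeCompl M) = LocalizedModule.mk 0 1 :=
    Subsingleton.elim _ _
  rw [LocalizedModule.mk_eq] at h0
  obtain ⟨s, hs⟩ := h0
  simp only [one_smul, smul_zero] at hs
  -- now s • m = 0 with s ∈ p.primeCompl
  have hs' : (s : R) • m = 0 := hs
  have hq0 : (s : R) • (B i) = 0 := by
    rw [← hmu, LocalizedModule.smul'_mk, hs', LocalizedModule.zero_mk]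
  have hq1 : (algebraMap R Rq s) • (B i) = 0 := by
    rwa [algebraMap_smul]
  have hmap0 : algebraMap R Rq s = 0 := by
    have := congrArg (fun x => B.repr x i) hq1
    simp only [map_smul, Module.Basis.repr_self, map_zero, Finsupp.smul_apply,
      Finsupp.single_eq_same, Finsupp.coe_zero, Pi.zero_apply, smul_eq_mul, mul_one] at this
    exact this
  rw [IsLocalization.map_eq_zero_iff q.primeCompl] at hmap0
  obtain ⟨t, ht⟩ := hmap0
  have htp : (t : R) ∈ p.primeCompl := fun h => t.2 (hpq h)
  have : (t : R) * s ∈ p.primeCompl := mul_mem htp s.2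
  rw [ht] at this
  exact this p.zero_mem
end

section
/- Let M be a projective module over a commutative ring R and let {I_α} be a family of ideals of R. Then ⋂_α (I_α M) = (⋂_α I_α) M as submodules of M. -/
lemma mem_smul_top_finsupp {R : Type*} [CommRing R] {σ : Type*} (I : Ideal R)
    (x : σ →₀ R) : x ∈ I • (⊤ : Submodule R (σ →₀ R)) ↔ ∀ i, x i ∈ I := by
  constructor
  · intro hx i
    refine Submodule.smul_induction_on hx (fun a ha f _ => ?_) (fun f g hf hg => ?_)
    · simpa using I.mul_mem_right (f i) ha
    · simpa using I.add_mem hf hg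
  · intro h
    have : x = x.sum fun i a => a • Finsupp.single i (1 : R) := by
      simp [Finsupp.smul_single, Finsupp.sum_single]
    rw [this]
    refine Submodule.sum_mem _ fun i _ => Submodule.smul_mem_smul (h i) trivial

/-- For a projective module `M` over a commutative ring `R` and a family of ideals `I α`,
`⋂ α, (I α) M = (⋂ α, I α) M`. -/
theorem stmt6 {R M : Type*} [CommRing R] [AddCommGroup M] [Module R M]
    [Module.Projective R M] {ι : Type*} (I : ι → Ideal R) :
    (⨅ α, (I α • ⊤ : Submodule R M)) = (⨅ α, I α) • (⊤ : Submodule R M) := by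
  refine le_antisymm ?_ (le_iInf fun α => Submodule.smul_mono_left (iInf_le _ α))
  obtain ⟨s, hs⟩ := Module.Projective.out (R := R) (P := M)
  intro x hx
  have hsx : ∀ α, s x ∈ (I α) • (⊤ : Submodule R (M →₀ R)) := fun α => by
    have : s x ∈ Submodule.map s (I α • ⊤) :=
      Submodule.mem_map_of_mem (Submodule.mem_iInf _ |>.mp hx α)
    rw [Submodule.map_smul''] at this
    exact SetLike.le_def.mp (smul_mono_right _ le_top) this
  have hkey : s x ∈ (⨅ α, I α) • (⊤ : Submodule R (M →₀ R)) := by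
    rw [mem_smul_top_finsupp]
    intro i
    exact Submodule.mem_iInf _ |>.mpr fun α => (mem_smul_top_finsupp _ _).mp (hsx α) i
  have : Finsupp.linearCombination R id (s x) ∈
      Submodule.map (Finsupp.linearCombination R (id : M → M)) ((⨅ α, I α) • ⊤) :=
    Submodule.mem_map_of_mem hkey
  rw [Submodule.map_smul''] at this
  have hx' := SetLike.le_def.mp (smul_mono_right _ le_top) this
  rwa [hs x] at hx'
end

section
/- Let M be a projective module over a commutative ring R and let p be a prime ideal of R. Then M_p = 0 if and only if M = pM. -/
/-- For a projective module `M` over a commutative ring `R` and a prime ideal `p`,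
`M_p = 0` if and only if `M = pM`. -/
theorem stmt7 {R M : Type*} [CommRing R] [AddCommGroup M] [Module R M]
    [Module.Projective R M] (p : Ideal R) [p.IsPrime] :
    Subsingleton (LocalizedModule p.primeCompl M) ↔ (p • ⊤ : Submodule R M) = ⊤ := by
  classical
  obtain ⟨s, hs⟩ := Module.projective_def.mp ‹Module.Projective R M›
  have hrep : ∀ m : M, m = (s m).sum fun x c => c • x := by
    intro m
    conv_lhs => rw [← hs m, Finsupp.linearCombination_apply]
    simp [Finsupp.sum]
  rw [LocalizedModule.subsingleton_iff]
  constructor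
  · intro H
    rw [eq_top_iff]
    intro m _
    obtain ⟨r, hr, hrm⟩ := H m
    rw [hrep m]
    apply Submodule.finsuppSum_mem
    intro x _
    refine Submodule.smul_mem_smul ?_ (Submodule.mem_top : x ∈ (⊤ : Submodule R M))
    -- r * (s m) x = 0
    have h0 : r * (s m) x = 0 := by
      have h1 : s (r • m) = 0 := by rw [hrm, map_zero]
      have h2 : (s (r • m)) x = 0 := by rw [h1]; rfl
      simpa using h2
    have : r * (s m) x ∈ p := h0 ▸ p.zero_mem
    exact ((Ideal.IsPrime.mem_or_mem ‹p.IsPrime› this).resolve_left hr)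
  · intro H m
    -- all coefficients of s y lie in p
    have hcoef : ∀ y : M, ∀ x : M, s y x ∈ p := by
      intro y x
      have hy : y ∈ (p • ⊤ : Submodule R M) := by rw [H]; trivial
      refine Submodule.smul_induction_on hy ?_ ?_
      · intro r hr n _
        have : s (r • n) x = r * s n x := by simp [map_smul]
        exact this ▸ p.mul_mem_right _ hr
      · intro a b ha hb
        have : s (a + b) x = s a x + s b x := by simp
        exact this ▸ p.add_mem ha hb
    set t := (s m).support with ht
    -- key identity: s m y = ∑ x in t, s m x * s x y
    have hkey : ∀ y : M, s m y = ∑ x ∈ t, s m x * s x y := by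
      intro y
      conv_lhs => rw [hrep m]
      rw [map_finsuppSum, Finsupp.sum_apply]
      rw [Finsupp.sum]
      refine Finset.sum_congr rfl fun x hx => ?_
      simp [map_smul]
    let A : Matrix t t R := fun y x => s (x : M) (y : M)
    let v : t → R := fun x => s m (x : M)
    have hmv : (1 - A).mulVec v = 0 := by
      rw [Matrix.sub_mulVec, Matrix.one_mulVec]
      funext y
      have h2 : ∑ x : t, A y x * v x = v y := by
        rw [show v y = s m (y : M) from rfl, hkey (y : M)]
        rw [← Finset.sum_coe_sort t (fun x => s m x * s x (y:M))]
        exact Finset.sum_congr rfl fun x _ => mul_comm _ _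
      simp only [Pi.sub_apply, Pi.zero_apply, Matrix.mulVec, dotProduct, h2, sub_self]
    have hdv : (1 - A).det • v = 0 := by
      have := congrArg (Matrix.mulVec (1 - A).adjugate) hmv
      rwa [Matrix.mulVec_mulVec, Matrix.adjugate_mul, Matrix.smul_mulVec,
        Matrix.one_mulVec, Matrix.mulVec_zero] at this
    have hdet : (1 - A).det ∉ p := by
      intro hd
      have hq : Ideal.Quotient.mk p ((1 - A).det) = 0 := (Ideal.Quotient.eq_zero_iff_mem).mpr hd
      rw [RingHom.map_det] at hq
      have hmap : (Ideal.Quotient.mk p).mapMatrix (1 - A) = 1 := by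
        funext i j
        simp only [RingHom.mapMatrix_apply, Matrix.map_apply, Matrix.sub_apply, map_sub,
          Matrix.one_apply]
        have : Ideal.Quotient.mk p (A i j) = 0 :=
          (Ideal.Quotient.eq_zero_iff_mem).mpr (hcoef _ _)
        rw [this, sub_zero]
        split <;> simp
      rw [hmap, Matrix.det_one] at hq
      exact one_ne_zero hq
    refine ⟨(1 - A).det, hdet, ?_⟩
    conv_lhs => rw [hrep m]
    rw [Finsupp.smul_sum]
    rw [Finsupp.sum, ← ht]
    refine Finset.sum_eq_zero fun x hx => ?_
    have hvx : (1 - A).det * v ⟨x, hx⟩ = 0 := congrFun hdv ⟨x, hx⟩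
    rw [smul_smul]
    have : (1 - A).det * s m x = 0 := hvx
    rw [this, zero_smul]
end

section
/- Let M be a flat R-module such that M_p is finitely generated over R_p for every prime p, and let p be a prime ideal of R. Then M_p = 0 if and only if M = pM. -/
/-- For a flat `R`-module `M` which is locally of finite type (every localization at a prime
is a finitely generated module), and a prime ideal `p`, `M_p = 0` iff `M = pM`. -/
theorem stmt8 {R M : Type*} [CommRing R] [AddCommGroup M] [Module R M]
    [Module.Flat R M]
    (hloc : ∀ (q : Ideal R) (_ : q.IsPrime),
      letI := ‹q.IsPrime›
      Module.Finite (Localization.AtPrime q) (LocalizedModule q.primeCompl M))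
    (p : Ideal R) [p.IsPrime] :
    Subsingleton (LocalizedModule p.primeCompl M) ↔ (p • ⊤ : Submodule R M) = ⊤ := by
  constructor
  · -- `M_p = 0 → pM = M`
    intro hsub
    rw [Submodule.eq_top_iff']
    intro m
    -- some `u ∉ p` kills `m`
    have h0 : (LocalizedModule.mk m 1 : LocalizedModule p.primeCompl M) =
        LocalizedModule.mk 0 1 := Subsingleton.elim _ _
    rw [LocalizedModule.mk_eq] at h0
    obtain ⟨u, hu⟩ := h0
    have hum : (u : R) • m = 0 := by have h := hu; simp at h; exact h
    -- `u` acts regularly on `R ⧸ p`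
    have hreg : IsSMulRegular (R ⧸ p) (u : R) := by
      intro a b hab
      replace hab : (u : R) • a = (u : R) • b := hab
      rw [Algebra.smul_def, Algebra.smul_def] at hab
      exact mul_left_cancel₀
        (by
          intro h
          rw [Ideal.Quotient.algebraMap_eq, Ideal.Quotient.eq_zero_iff_mem] at h
          exact u.2 h) hab
    -- transfer regularity to `M ⧸ pM` using flatness
    have hreg2 : IsSMulRegular (TensorProduct R (R ⧸ p) M) (u : R) := hreg.rTensor M
    have hreg3 : IsSMulRegular (M ⧸ (p • ⊤ : Submodule R M)) (u : R) :=
      ((TensorProduct.quotTensorEquivQuotSMul M p).isSMulRegular_congr _).mp hreg2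
    have hz : (u : R) • (Submodule.Quotient.mk m : M ⧸ (p • ⊤ : Submodule R M)) =
        (u : R) • (0 : M ⧸ (p • ⊤ : Submodule R M)) := by
      rw [smul_zero, ← Submodule.Quotient.mk_smul, hum, Submodule.Quotient.mk_zero]
    have := hreg3 hz
    rwa [Submodule.Quotient.mk_eq_zero] at this
  · -- `pM = M → M_p = 0` by Nakayama
    intro htop
    haveI := hloc p ‹p.IsPrime›
    set I := IsLocalRing.maximalIdeal (Localization.AtPrime p)
    have key : ∀ m : M, (LocalizedModule.mk m 1 : LocalizedModule p.primeCompl M) ∈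
        (I • ⊤ : Submodule (Localization.AtPrime p) (LocalizedModule p.primeCompl M)) := by
      intro m
      have hm : m ∈ (p • ⊤ : Submodule R M) := htop.ge Submodule.mem_top
      refine Submodule.smul_induction_on hm (fun a ha n _ => ?_) (fun x y hx hy => ?_)
      · have : (LocalizedModule.mk (a • n) 1 : LocalizedModule p.primeCompl M) =
            algebraMap R (Localization.AtPrime p) a • LocalizedModule.mk n 1 := by
          rw [algebraMap_smul, LocalizedModule.smul'_mk]
        rw [this]
        exact Submodule.smul_mem_smul
          ((IsLocalization.AtPrime.to_map_mem_maximal_iff _ p a).mpr ha) Submodule.mem_top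
      · have : (LocalizedModule.mk (x + y) 1 : LocalizedModule p.primeCompl M) =
            LocalizedModule.mk x 1 + LocalizedModule.mk y 1 := by
          rw [LocalizedModule.mk_add_mk]; simp
        rw [this]; exact Submodule.add_mem _ hx hy
    have hle : (⊤ : Submodule (Localization.AtPrime p) (LocalizedModule p.primeCompl M)) ≤
        I • ⊤ := by
      rintro x -
      induction x using LocalizedModule.induction_on with
      | h m s =>
        have : (LocalizedModule.mk m s : LocalizedModule p.primeCompl M) =
            Localization.mk 1 s • LocalizedModule.mk m 1 := by
          rw [LocalizedModule.mk_smul_mk, one_smul, mul_one]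
        rw [this]
        exact Submodule.smul_mem _ _ (key m)
    have hbot := Submodule.eq_bot_of_le_smul_of_le_jacobson_bot I ⊤ Module.Finite.fg_top hle
      (IsLocalRing.maximalIdeal_le_jacobson ⊥)
    refine subsingleton_of_forall_eq 0 fun x => ?_
    have hx : x ∈ (⊥ : Submodule (Localization.AtPrime p) (LocalizedModule p.primeCompl M)) :=
      hbot.le Submodule.mem_top
    simpa using hx
end

section
/- The support of a projective module over a commutative ring is open in the Zariski topology on Spec R. -/
open Finsupp Matrix

/-- Determinant trick: if all "coordinates" of the projectivity section lie in a prime `p`,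
then every element of `M` is killed by some element outside `p`. -/
lemma stmt9_aux {R M : Type*} [CommRing R] [AddCommGroup M] [Module R M]
    (s : M →ₗ[R] M →₀ R) (hs : Function.LeftInverse (Finsupp.linearCombination R id) s)
    (p : PrimeSpectrum R) (h : ∀ m x : M, s m x ∈ p.asIdeal) (m : M) :
    ∃ t ∉ p.asIdeal, t • m = 0 := by
  classical
  set S := (s m).support with hS
  let B : Matrix S S R := fun j i => s (i : M) (j : M)
  let v : S → R := fun i => s m (i : M)
  have hmv : m = ∑ i : S, v i • (i : M) := by
    conv_lhs => rw [← hs m]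
    rw [Finsupp.linearCombination_apply, Finsupp.sum, ← Finset.sum_coe_sort]
    rfl
  have hsm : ∀ j : S, s m (j : M) = ∑ i : S, v i * s (i : M) (j : M) := by
    intro j
    conv_lhs => rw [hmv]
    rw [map_sum]
    simp [Finsupp.finset_sum_apply, smul_eq_mul]
  have hv : (1 - B).mulVec v = 0 := by
    funext j
    simp only [Matrix.sub_mulVec, Pi.sub_apply, Matrix.one_mulVec, Pi.zero_apply, sub_eq_zero]
    rw [Matrix.mulVec]
    show v j = ∑ i : S, B j i * v i
    simp only [v, B]
    rw [hsm j]
    exact Finset.sum_congr rfl fun i _ => mul_comm _ _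
  set t := (1 - B).det with ht
  refine ⟨t, ?_, ?_⟩
  · intro htp
    have h1 : ((1 - B).map (Ideal.Quotient.mk p.asIdeal)) = 1 := by
      ext i j
      by_cases hij : i = j <;> simp only [Matrix.map_apply, Matrix.sub_apply] <;>
        simp [hij, Matrix.one_apply, Ideal.Quotient.eq_zero_iff_mem.mpr (h _ _), B,
          Ideal.Quotient.eq_zero_iff_mem]
    have h2 : Ideal.Quotient.mk p.asIdeal t = 1 := by
      rw [ht, ← Matrix.det_one (n := S) (R := R ⧸ p.asIdeal), ← h1, RingHom.map_det]
      rfl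
    rw [Ideal.Quotient.eq_zero_iff_mem.mpr htp] at h2
    exact zero_ne_one h2
  · have htv : t • v = 0 := by
      have := congrArg ((1 - B).adjugate.mulVec) hv
      rwa [Matrix.mulVec_mulVec, Matrix.adjugate_mul, Matrix.smul_mulVec,
        Matrix.one_mulVec, Matrix.mulVec_zero] at this
    rw [hmv, Finset.smul_sum]
    refine Finset.sum_eq_zero fun i _ => ?_
    rw [smul_smul]
    have : t * v i = 0 := congrFun htv i
    rw [this, zero_smul]

/-- The support of a projective module over a commutative ring is Zariski open in `Spec R`. -/
theorem stmt9 {R : Type*} (M : Type*) [CommRing R] [AddCommGroup M] [Module R M]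
    [Module.Projective R M] :
    IsOpen (Module.support R M) := by
  obtain ⟨s, hs⟩ := Module.projective_def.mp ‹Module.Projective R M›
  have key : Module.support R M =
      ⋃ (m : M) (x : M), ↑(PrimeSpectrum.basicOpen (s m x)) := by
    ext p
    simp only [Set.mem_iUnion, SetLike.mem_coe, PrimeSpectrum.mem_basicOpen]
    constructor
    · intro hp
      by_contra hcon
      push_neg at hcon
      rw [Module.mem_support_iff'] at hp
      obtain ⟨m, hm⟩ := hp
      obtain ⟨t, htp, htm⟩ := stmt9_aux s hs p hcon m
      exact hm t htp htm
    · rintro ⟨m, x, hx⟩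
      rw [Module.mem_support_iff_exists_annihilator]
      refine ⟨m, fun r hr => ?_⟩
      rw [Submodule.mem_annihilator_span_singleton] at hr
      have hz : r * s m x = 0 := by
        have : s (r • m) x = 0 := by rw [hr, map_zero]; rfl
        rwa [LinearMap.map_smul, Finsupp.smul_apply, smul_eq_mul] at this
      have : r * s m x ∈ p.asIdeal := hz ▸ p.asIdeal.zero_mem
      exact (p.2.mem_or_mem this).resolve_right hx
  rw [key]
  exact isOpen_iUnion fun m => isOpen_iUnion fun x => (PrimeSpectrum.basicOpen _).2
end

section
/- Let M be an R-module with M_p free over R_p for each prime p. Then for each natural number n, the support of the n-th exterior power Λⁿ(M) equals the set of primes p for which the rank of M_p over R_p is at least n. -/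
open LocalizedModule ExteriorAlgebra

section Aux

variable {R M : Type*} [CommRing R] [AddCommGroup M] [Module R M]
  (p : Ideal R) [p.IsPrime]

local notation "Rp" => Localization.AtPrime p
local notation "Mp" => LocalizedModule p.primeCompl M

lemma aux_mk_surj (x : Mp) : ∃ (m : M) (s : p.primeCompl), LocalizedModule.mk m s = x := by
  induction x using LocalizedModule.induction_on with
  | _ m s => exact ⟨m, s, rfl⟩

lemma aux_mk_one (m : M) (s : p.primeCompl) :
    LocalizedModule.mk m (1 : p.primeCompl) = (s : R) • LocalizedModule.mk m s := by
  rw [LocalizedModule.smul'_mk, ← LocalizedModule.mk_cancel s m]; rfl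

variable (n : ℕ)

/-- The coordinate map `M → (Fin n → Rp)` relative to an embedding `e : Fin n ↪ ι`
and a basis `b` of `Mp`. -/
noncomputable def auxL {ι : Type*} (b : Module.Basis ι Rp Mp) (e : Fin n ↪ ι) :
    M →ₗ[R] (Fin n → Rp) :=
  LinearMap.pi fun k =>
    ((b.coord (e k)).restrictScalars R) ∘ₗ LocalizedModule.mkLinearMap p.primeCompl M

/-- The alternating map `M^n → Rp` given by the determinant of coordinates. -/
noncomputable def auxA {ι : Type*} (b : Module.Basis ι Rp Mp) (e : Fin n ↪ ι) :
    M [⋀^Fin n]→ₗ[R] Rp where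
  toMultilinearMap :=
    ((Matrix.detRowAlternating (R := Rp) (n := Fin n)).toMultilinearMap.restrictScalars
      R).compLinearMap fun _ => auxL p n b e
  map_eq_zero_of_eq' v i j h hij := by
    simpa using Matrix.detRowAlternating.map_eq_zero_of_eq (fun k => auxL p n b e (v k))
      (by show auxL p n b e (v i) = auxL p n b e (v j); rw [h]) hij

lemma auxA_apply {ι : Type*} (b : Module.Basis ι Rp Mp) (e : Fin n ↪ ι) (v : Fin n → M) :
    auxA p n b e v = Matrix.detRowAlternating (fun k => auxL p n b e (v k)) := rfl

end Aux

section LemA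

variable {R M : Type*} [CommRing R] [AddCommGroup M] [Module R M]
  (p : Ideal R) [p.IsPrime]

local notation "Rp" => Localization.AtPrime p
local notation "Mp" => LocalizedModule p.primeCompl M

lemma lemA [Module.Free Rp Mp] (n : ℕ)
    (hn : (n : Cardinal) ≤ Module.rank Rp Mp) :
    ∃ x : ⋀[R]^n M, ∀ r ∉ p, r • x ≠ 0 := by
  classical
  set ι := Module.Free.ChooseBasisIndex Rp Mp
  set b : Module.Basis ι Rp Mp := Module.Free.chooseBasis Rp Mp
  rw [Module.Free.rank_eq_card_chooseBasisIndex] at hn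
  obtain ⟨t, ht⟩ := Cardinal.exists_finset_le_card ι n hn
  set e : Fin n ↪ ι :=
    (Fin.castLEEmb ht).trans (t.equivFin.symm.toEmbedding.trans (Function.Embedding.subtype _))
  choose m s hms using fun k => aux_mk_surj p (b (e k))
  -- the wedge of the m's
  refine ⟨⟨ιMulti R n m, ιMulti_range R n ⟨m, rfl⟩⟩, fun r hr hzero => ?_⟩
  -- the detection functional
  set F : ExteriorAlgebra R M →ₗ[R] Rp :=
    ExteriorAlgebra.liftAlternating
      (Function.update (fun i => (0 : M [⋀^Fin i]→ₗ[R] Rp)) n (auxA p n b e))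
  have hF : F (ιMulti R n m) = ∏ k : Fin n, algebraMap R Rp (s k) := by
    rw [ExteriorAlgebra.liftAlternating_apply_ιMulti, Function.update_self, auxA_apply]
    have hrow : (fun k => auxL p n b e (m k)) =
        fun i => Matrix.diagonal (fun k => algebraMap R Rp (s k)) i := by
      funext i j
      simp only [auxL, LinearMap.pi_apply, LinearMap.comp_apply,
        LinearMap.coe_restrictScalars, LocalizedModule.mkLinearMap_apply]
      rw [aux_mk_one p (m i) (s i), hms i, algebra_compatible_smul Rp ((s i : R)),
        map_smul, Module.Basis.coord_apply, Module.Basis.repr_self]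
      rcases eq_or_ne i j with rfl | hij
      · simp [Matrix.diagonal, Algebra.smul_def]
      · have : e i ≠ e j := fun h => hij (e.injective h)
        simp [Finsupp.single_apply, this, Matrix.diagonal, hij]
    rw [hrow]
    exact (Matrix.det_diagonal)
  -- from r • x = 0 derive contradiction
  have h0 : r • ιMulti R n m = (0 : ExteriorAlgebra R M) := congrArg Subtype.val hzero
  have := congrArg F h0
  rw [map_smul, map_zero, hF, algebra_compatible_smul Rp r, smul_eq_mul] at this
  have hu : IsUnit (algebraMap R Rp r * ∏ k : Fin n, algebraMap R Rp (s k)) := by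
    rw [← map_prod, ← map_mul]
    exact IsLocalization.map_units Rp
      (⟨r * ∏ k : Fin n, (s k : R), Submonoid.mul_mem _ hr
        (Submonoid.prod_mem _ fun k _ => (s k).2)⟩ : p.primeCompl)
  rw [this] at hu
  exact not_isUnit_zero hu

end LemA

section LemB

variable {R M : Type*} [CommRing R] [AddCommGroup M] [Module R M]
  (p : Ideal R) [p.IsPrime]

local notation "Rp" => Localization.AtPrime p
local notation "Mp" => LocalizedModule p.primeCompl M

/-- Clearing denominators: every element of `M` is, after multiplication by some
`s ∉ p`, an `R`-linear combination of the `u i` when the `mk (u i) 1` span `Mp`. -/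
lemma lemB_clear {ι : Type*} [Fintype ι] (b : Module.Basis ι Rp Mp) (u : ι → M)
    (t : ι → p.primeCompl) (hu : ∀ i, LocalizedModule.mk (u i) 1 = (t i : R) • b i)
    (v : M) :
    ∃ s ∈ p.primeCompl, ∃ a : ι → R, s • v = ∑ i, a i • u i := by
  classical
  set w : Mp := LocalizedModule.mk v 1 with hw
  -- coefficients in Rp with denominators cleared against the units t i
  set c : ι → Rp := fun i =>
    b.repr w i * (((IsLocalization.map_units (M := p.primeCompl) Rp (t i)).unit⁻¹ : _) : Rp)
    with hc
  have hcw : w = ∑ i, c i • LocalizedModule.mk (u i) 1 := by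
    have := b.sum_repr w
    rw [← this]
    refine Finset.sum_congr rfl fun i _ => ?_
    rw [hu i, algebra_compatible_smul Rp ((t i : R)), hc]
    rw [smul_smul, mul_assoc, IsUnit.val_inv_mul, mul_one]
  obtain ⟨s, hs⟩ := IsLocalization.exist_integer_multiples_of_finite p.primeCompl c
  choose a ha using hs
  have key : LocalizedModule.mk (((s : R) • v : M)) (1 : p.primeCompl) = LocalizedModule.mk ((∑ i, a i • u i : M)) (1 : p.primeCompl) := by
    have h1 : LocalizedModule.mk ((s : R) • v) 1 = (s : R) • w := by
      rw [hw, LocalizedModule.smul'_mk]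
    have h2 : LocalizedModule.mk ((∑ i, a i • u i : M)) (1 : p.primeCompl)
        = ∑ i, (a i) • LocalizedModule.mk (u i) (1 : p.primeCompl) := by
      rw [← LocalizedModule.mkLinearMap_apply, map_sum]
      exact Finset.sum_congr rfl fun i _ => by rw [map_smul, LocalizedModule.mkLinearMap_apply]
    rw [h1, hcw, Finset.smul_sum, h2]
    refine Finset.sum_congr rfl fun i _ => ?_
    refine Eq.symm ?_
    calc a i • LocalizedModule.mk (u i) (1 : p.primeCompl)
        = algebraMap R Rp (a i) • LocalizedModule.mk (u i) (1 : p.primeCompl) :=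
          (algebraMap_smul Rp _ _).symm
      _ = ((s : R) • c i) • LocalizedModule.mk (u i) (1 : p.primeCompl) := by rw [ha i]
      _ = (algebraMap R Rp (s : R) * c i) • LocalizedModule.mk (u i) (1 : p.primeCompl) := by
          rw [Algebra.smul_def]
      _ = algebraMap R Rp (s : R) • (c i • LocalizedModule.mk (u i) (1 : p.primeCompl)) :=
          mul_smul _ _ _
      _ = (s : R) • (c i • LocalizedModule.mk (u i) (1 : p.primeCompl)) :=
          algebraMap_smul Rp _ _
  rw [LocalizedModule.mk_eq] at key
  obtain ⟨z, hz⟩ := key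
  simp only [one_smul, Submonoid.smul_def] at hz
  refine ⟨(z : R) * (s : R), Submonoid.mul_mem _ z.2 s.2, fun i => (z : R) * a i, ?_⟩
  rw [mul_smul, hz, Finset.smul_sum]
  exact Finset.sum_congr rfl fun i _ => (mul_smul (z : R) (a i) (u i)).symm

end LemB

section LemB2

variable {R M : Type*} [CommRing R] [AddCommGroup M] [Module R M]
  (p : Ideal R) [p.IsPrime]

local notation "Rp" => Localization.AtPrime p
local notation "Mp" => LocalizedModule p.primeCompl M

lemma lemB [Module.Free Rp Mp] (n : ℕ)
    (hn : Module.rank Rp Mp < n) :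
    ∀ x : ⋀[R]^n M, ∃ r ∈ p.primeCompl, r • x = 0 := by
  classical
  set ι := Module.Free.ChooseBasisIndex Rp Mp with hι
  set b : Module.Basis ι Rp Mp := Module.Free.chooseBasis Rp Mp with hb
  rw [Module.Free.rank_eq_card_chooseBasisIndex] at hn
  have hfin : Finite ι := Cardinal.mk_lt_aleph0_iff.mp (hn.trans (Cardinal.nat_lt_aleph0 n))
  haveI := Fintype.ofFinite ι
  have hcard : Fintype.card ι < n := by
    rwa [Cardinal.mk_fintype, Nat.cast_lt] at hn
  -- choose representatives for the basis vectors
  choose u t hut using fun i => aux_mk_surj p (b i)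
  have hu : ∀ i, LocalizedModule.mk (u i) 1 = (t i : R) • b i := by
    intro i; rw [aux_mk_one p (u i) (t i), hut i]
  -- prove the annihilation statement for the whole exterior power by span induction
  intro x
  have hx : (x : ExteriorAlgebra R M) ∈
      Submodule.span R (Set.range (ιMulti R n (M := M))) := by
    rw [ιMulti_span_fixedDegree]; exact x.2
  have key : ∃ r ∈ p.primeCompl, r • (x : ExteriorAlgebra R M) = 0 := by
    refine Submodule.span_induction
      (p := fun y _ => ∃ r ∈ p.primeCompl, r • y = 0) ?_ ?_ ?_ ?_ hx
    · rintro y ⟨v, rfl⟩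
      choose s hs a ha using fun j => lemB_clear p b u t hu (v j)
      refine ⟨∏ j, s j, Submonoid.prod_mem _ (fun j _ => hs j), ?_⟩
      have h1 : (∏ j, s j) • ιMulti R n v
          = (ιMulti R n).toMultilinearMap (fun j => s j • v j) :=
        ((ιMulti R n).toMultilinearMap.map_smul_univ s v).symm
      rw [h1]
      have h2 : (fun j => s j • v j) = fun j => ∑ i, a j i • u i := funext ha
      rw [h2]
      rw [(ιMulti R n (M := M)).toMultilinearMap.map_sum (fun j i => a j i • u i)]
      refine Finset.sum_eq_zero fun g _ => ?_
      have h3 : (ιMulti R n).toMultilinearMap (fun j => a j (g j) • u (g j))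
          = (∏ j, a j (g j)) • (ιMulti R n).toMultilinearMap (fun j => u (g j)) :=
        (ιMulti R n).toMultilinearMap.map_smul_univ _ _
      rw [h3]
      have hginj : ¬ Function.Injective (fun j => u (g j)) := by
        intro hinj
        have : ¬ Function.Injective g := fun hg =>
          absurd (Fintype.card_le_of_injective g hg) (by simp [hcard.not_ge])
        exact this fun j k hjk => hinj (by simp [hjk])
      rw [show (ιMulti R n).toMultilinearMap (fun j => u (g j)) = 0 from
        (ιMulti R n).map_eq_zero_of_not_injective _ hginj]
      simp
    · exact ⟨1, one_mem _, by simp⟩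
    · rintro y z _ _ ⟨r, hr, hry⟩ ⟨r', hr', hrz⟩
      refine ⟨r * r', mul_mem hr hr', ?_⟩
      rw [smul_add]
      rw [show (r * r') • y = r' • (r • y) by rw [← mul_smul, mul_comm],
        show (r * r') • z = r • (r' • z) from (mul_smul r r' z),
        hry, hrz, smul_zero, smul_zero, add_zero]
    · rintro c y _ ⟨r, hr, hry⟩
      exact ⟨r, hr, by rw [smul_comm, hry, smul_zero]⟩
  obtain ⟨r, hr, hrx⟩ := key
  exact ⟨r, hr, Subtype.ext (by simpa using hrx)⟩

end LemB2

/-- For a locally free `R`-module `M` and `n : ℕ`, the support of the `n`-th exterior power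
`Λⁿ M` consists exactly of the primes `p` at which `M_p` has rank `≥ n`. -/
theorem stmt10 {R M : Type*} [CommRing R] [AddCommGroup M] [Module R M]
    (hfree : ∀ (p : Ideal R) (_ : p.IsPrime),
      letI := ‹p.IsPrime›
      Module.Free (Localization.AtPrime p) (LocalizedModule p.primeCompl M))
    (n : ℕ) :
    Module.support R (⋀[R]^n M) =
      {p : PrimeSpectrum R |
        (n : Cardinal) ≤
          Module.rank (Localization.AtPrime p.asIdeal)
            (LocalizedModule p.asIdeal.primeCompl M)} := by
  ext p
  haveI := hfree p.asIdeal p.2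
  simp only [Set.mem_setOf_eq]
  constructor
  · intro hp
    by_contra hlt
    rw [not_le] at hlt
    rw [Module.mem_support_iff'] at hp
    obtain ⟨m, hm⟩ := hp
    obtain ⟨r, hr, hr0⟩ := lemB p.asIdeal n hlt m
    exact hm r hr hr0
  · intro hle
    rw [Module.mem_support_iff']
    exact lemA p.asIdeal n hle
end

section
/- If R is a commutative ring with only finitely many maximal ideals (semilocal), then every finitely generated flat R-module is projective. -/
open LinearMap TensorProduct

universe u v

/-- Determinant trick: an endomorphism of a finite free module over a local ring whose image
has all coordinates in the maximal ideal and which fixes `x` forces `x = 0`. -/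
lemma auxDet {R : Type u} [CommRing R] [IsLocalRing R] {ι : Type*} [Fintype ι]
    (θ : (ι →₀ R) →ₗ[R] (ι →₀ R))
    (hθ : ∀ z : ι →₀ R, ∀ i, θ z i ∈ IsLocalRing.maximalIdeal R)
    {x : ι →₀ R} (hx : θ x = x) : x = 0 := by
  classical
  set m := IsLocalRing.maximalIdeal R
  let b : Module.Basis ι R (ι →₀ R) := Finsupp.basisSingleOne
  set A := LinearMap.toMatrix b b θ with hA
  have hAm : ∀ i j, A i j ∈ m := by
    intro i j
    have : A i j = θ (Finsupp.single j 1) i := by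
      simp [hA, LinearMap.toMatrix_apply, b]
    rw [this]
    exact hθ _ _
  have hdet : IsUnit ((1 - A).det) := by
    by_contra h
    have hm : (1 - A).det ∈ m := by
      rwa [IsLocalRing.mem_maximalIdeal, mem_nonunits_iff]
    have h1 : (Ideal.Quotient.mk m).mapMatrix (1 - A) = 1 := by
      ext i j
      by_cases hij : i = j <;>
        simp [Matrix.one_apply, hij, Ideal.Quotient.eq_zero_iff_mem, hAm]
    have : Ideal.Quotient.mk m ((1 - A).det) = 1 := by
      rw [RingHom.map_det, h1, Matrix.det_one]
    rw [Ideal.Quotient.eq_zero_iff_mem.mpr hm] at this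
    exact zero_ne_one this
  have hmat : LinearMap.toMatrix b b ((LinearMap.id : (ι →₀ R) →ₗ[R] (ι →₀ R)) - θ) = 1 - A := by
    have h := map_sub (LinearMap.toMatrix b b) (LinearMap.id : (ι →₀ R) →ₗ[R] (ι →₀ R)) θ
    rw [h, LinearMap.toMatrix_id]
  have hinj : Function.Injective ((LinearMap.id : (ι →₀ R) →ₗ[R] (ι →₀ R)) - θ) := by
    have h2 : IsUnit (LinearMap.toMatrix b b
        ((LinearMap.id : (ι →₀ R) →ₗ[R] (ι →₀ R)) - θ)).det := by
      rw [hmat]; exact hdet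
    exact (LinearEquiv.ofIsUnitDet h2).injective
  have h3 : ((LinearMap.id : (ι →₀ R) →ₗ[R] (ι →₀ R)) - θ) x
      = ((LinearMap.id : (ι →₀ R) →ₗ[R] (ι →₀ R)) - θ) 0 := by
    simp only [LinearMap.sub_apply, LinearMap.id_apply, hx, sub_self, map_zero]
  simpa using hinj h3

/-- If `F/K` is flat with `F` finite free, any element of `K` is fixed by some endomorphism
of `F` with range inside `K`. -/
lemma auxTheta {R : Type u} [CommRing R] {ι : Type u} [Fintype ι] (K : Submodule R (ι →₀ R))
    [Module.Flat R ((ι →₀ R) ⧸ K)] {x : ι →₀ R} (hx : x ∈ K) :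
    ∃ θ : (ι →₀ R) →ₗ[R] (ι →₀ R), LinearMap.range θ ≤ K ∧ θ x = x := by
  have h0 : K.mkQ x = 0 := (Submodule.Quotient.mk_eq_zero K).mpr hx
  obtain ⟨κ, a, y, hya, hax⟩ :=
    Module.Flat.exists_factorization_of_apply_eq_zero_of_free (x := K.mkQ) (f := x) h0
  obtain ⟨z, hz⟩ := Module.projective_lifting_property K.mkQ y K.mkQ_surjective
  refine ⟨(LinearMap.id : (ι →₀ R) →ₗ[R] (ι →₀ R)) - z ∘ₗ a, ?_, ?_⟩
  · rintro _ ⟨w, rfl⟩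
    have h4 : K.mkQ (((LinearMap.id : (ι →₀ R) →ₗ[R] (ι →₀ R)) - z ∘ₗ a) w) = 0 := by
      have h1 : K.mkQ (z (a w)) = y (a w) := by
        rw [← hz]; rfl
      have h2 : K.mkQ w = y (a w) := by
        rw [hya]; rfl
      simp only [LinearMap.sub_apply, LinearMap.id_apply, LinearMap.comp_apply, map_sub, h1, h2,
        sub_self]
    rwa [Submodule.mkQ_apply, Submodule.Quotient.mk_eq_zero] at h4
  · simp only [LinearMap.sub_apply, LinearMap.id_apply, LinearMap.comp_apply, hax, map_zero,
      sub_zero]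

/-- A finitely generated flat module over a local ring is free. -/
lemma auxFree {R : Type u} {M : Type v} [CommRing R] [IsLocalRing R] [AddCommGroup M]
    [Module R M] [Module.Finite R M] [Module.Flat R M] : Module.Free R M := by
  classical
  let k := IsLocalRing.ResidueField R
  let n := Module.finrank k (k ⊗[R] M)
  let ι := ULift.{u} (Fin n)
  let b : Module.Basis ι k (k ⊗[R] M) := (Module.finBasis k _).reindex Equiv.ulift.symm
  have hsurj : Function.Surjective (TensorProduct.mk R k M 1) :=
    TensorProduct.mk_surjective R M k Ideal.Quotient.mk_surjective
  choose f hf using fun i => hsurj (b i)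
  let π : (ι →₀ R) →ₗ[R] M := Finsupp.linearCombination R f
  have hπ : Function.Surjective π := by
    rw [← LinearMap.range_eq_top, Finsupp.range_linearCombination]
    exact IsLocalRing.span_eq_top_of_tmul_eq_basis f b hf
  have hcoord : ∀ x ∈ LinearMap.ker π, ∀ i, x i ∈ IsLocalRing.maximalIdeal R := by
    intro x hx i
    have hx0 : π x = 0 := hx
    have hsum : ∑ j, x j • f j = 0 := by
      rw [Finsupp.linearCombination_apply, Finsupp.sum_fintype] at hx0
      · exact hx0
      · intro _; exact zero_smul _ _
    have hsum2 : ∑ j, IsLocalRing.residue R (x j) • b j = 0 := by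
      have := congrArg (TensorProduct.mk R k M 1) hsum
      rw [map_sum, map_zero] at this
      simp only [map_smul] at this
      calc ∑ j, IsLocalRing.residue R (x j) • b j
          = ∑ j, x j • (TensorProduct.mk R k M 1 (f j)) := by
            refine Finset.sum_congr rfl fun j _ => ?_
            rw [hf j, ← algebraMap_smul k (x j) (b j)]
            rfl
        _ = 0 := this
    have hlin := Fintype.linearIndependent_iff.mp b.linearIndependent
      (fun j => IsLocalRing.residue R (x j)) hsum2 i
    exact Ideal.Quotient.eq_zero_iff_mem.mp hlin
  have hflat : Module.Flat R ((ι →₀ R) ⧸ LinearMap.ker π) :=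
    Module.Flat.of_linearEquiv (π.quotKerEquivOfSurjective hπ)
  have hker : LinearMap.ker π = ⊥ := by
    rw [eq_bot_iff]
    intro x hx
    obtain ⟨θ, hθr, hθx⟩ := auxTheta (LinearMap.ker π) hx
    have : x = 0 := auxDet θ (fun z i => hcoord _ (hθr ⟨z, rfl⟩) i) hθx
    simp [this]
  exact Module.Free.of_equiv
    (LinearEquiv.ofBijective π ⟨LinearMap.ker_eq_bot.mp hker, hπ⟩)

/-- At each maximal ideal, the kernel of a finite free presentation of a finitely generated
flat module localizes to a finitely generated submodule, witnessed by finitely many elements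
of the kernel. -/
lemma auxKfg {R : Type u} {M : Type v} [CommRing R] [AddCommGroup M] [Module R M]
    [Module.Flat R M] {n : ℕ} (π : (Fin n →₀ R) →ₗ[R] M) (hπ : Function.Surjective π)
    (P : Ideal R) [P.IsMaximal] :
    ∃ c : Finset (Fin n →₀ R), (c : Set (Fin n →₀ R)) ⊆ (LinearMap.ker π : Set (Fin n →₀ R)) ∧
      (LinearMap.ker π).localized' (Localization.AtPrime P) P.primeCompl
          (LocalizedModule.mkLinearMap P.primeCompl (Fin n →₀ R)) ≤
        (Submodule.span R (c : Set (Fin n →₀ R))).localized' (Localization.AtPrime P)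
          P.primeCompl (LocalizedModule.mkLinearMap P.primeCompl (Fin n →₀ R)) := by
  classical
  haveI : Module.Finite R M := Module.Finite.of_surjective π hπ
  set F := (Fin n →₀ R) with hF
  set K := LinearMap.ker π with hK
  let Rₚ := Localization.AtPrime P
  let fF := LocalizedModule.mkLinearMap P.primeCompl F
  let fM := LocalizedModule.mkLinearMap P.primeCompl M
  haveI : Module.Finite Rₚ (LocalizedModule P.primeCompl F) :=
    Module.Finite.of_isLocalizedModule P.primeCompl fF
  haveI : Module.Finite Rₚ (LocalizedModule P.primeCompl M) :=
    Module.Finite.of_isLocalizedModule P.primeCompl fM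
  haveI : Module.Free Rₚ (LocalizedModule P.primeCompl M) := auxFree
  haveI : Module.FinitePresentation Rₚ (LocalizedModule P.primeCompl M) :=
    Module.finitePresentation_of_projective _ _
  let πₚ := (IsLocalizedModule.map P.primeCompl fF fM π).extendScalarsOfIsLocalization
    P.primeCompl Rₚ
  have hπₚ : Function.Surjective πₚ :=
    IsLocalizedModule.map_surjective P.primeCompl fF fM π hπ
  have hfg : (LinearMap.ker πₚ).FG := by
    have := Module.FinitePresentation.fg_ker (R := Rₚ) (M := LocalizedModule P.primeCompl F)
      (N := LocalizedModule P.primeCompl M) πₚ hπₚ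
    exact this
  rw [← LinearMap.localized'_ker_eq_ker_localizedMap Rₚ P.primeCompl fF fM π] at hfg
  obtain ⟨T, hT⟩ := hfg
  have hTmem : ∀ t ∈ T, t ∈ K.localized' Rₚ P.primeCompl fF := fun t ht =>
    hT ▸ Submodule.subset_span ht
  choose m hmK sden hmk using fun t : T => hTmem t t.2
  refine ⟨T.attach.image m, ?_, ?_⟩
  · intro x hx
    simp only [Finset.coe_image, Set.mem_image] at hx
    obtain ⟨t, _, rfl⟩ := hx
    exact hmK t
  · rw [← hT, Submodule.span_le]
    intro t ht
    exact ⟨m ⟨t, ht⟩, Submodule.subset_span (by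
      simp only [Finset.coe_image, Set.mem_image]
      exact ⟨⟨t, ht⟩, by simp, rfl⟩), sden ⟨t, ht⟩, hmk ⟨t, ht⟩⟩

/-- Over a commutative ring with only finitely many maximal ideals, every finitely
generated flat module is projective. -/
theorem stmt12 {R M : Type*} [CommRing R] [AddCommGroup M] [Module R M]
    (hsemi : {I : Ideal R | I.IsMaximal}.Finite)
    [Module.Finite R M] [Module.Flat R M] :
    Module.Projective R M := by
  classical
  obtain ⟨n, g, hg⟩ := Module.Finite.exists_fin (R := R) (M := M)
  set F := (Fin n →₀ R) with hF
  let π : F →ₗ[R] M := Finsupp.linearCombination R g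
  have hπ : Function.Surjective π := by
    rw [← LinearMap.range_eq_top, Finsupp.range_linearCombination, hg]
  set K := LinearMap.ker π with hK
  have hloc := fun (P : {I : Ideal R // I.IsMaximal}) =>
    haveI := P.2
    auxKfg π hπ P.1
  choose c hc1 hc2 using hloc
  haveI : Finite {I : Ideal R // I.IsMaximal} := by exact hsemi.to_subtype
  let s : Set F := ⋃ (P : {I : Ideal R // I.IsMaximal}), (c P : Set F)
  have hsfin : s.Finite := Set.finite_iUnion fun P => (c P).finite_toSet
  have hsK : s ⊆ (K : Set F) := Set.iUnion_subset fun P => hc1 P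
  have hNK : Submodule.span R s ≤ K := Submodule.span_le.mpr hsK
  have hKN : K = Submodule.span R s := by
    apply Submodule.eq_of_localization_maximal (fun P _ => Localization.AtPrime P)
      (fun P _ => LocalizedModule P.primeCompl F)
      (fun P _ => LocalizedModule.mkLinearMap P.primeCompl F)
    intro P hP
    apply le_antisymm
    · refine le_trans (hc2 ⟨P, hP⟩) ?_
      rintro x ⟨w, hw, t, rfl⟩
      exact ⟨w, Submodule.span_mono (Set.subset_iUnion
        (fun Q : {I : Ideal R // I.IsMaximal} => (c Q : Set F)) ⟨P, hP⟩) hw, t, rfl⟩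
    · rintro x ⟨w, hw, t, rfl⟩
      exact ⟨w, hNK hw, t, rfl⟩
  have hKfg : K.FG := by
    rw [hKN]
    exact Submodule.fg_span hsfin
  haveI : Module.FinitePresentation R M :=
    Module.finitePresentation_of_surjective π hπ hKfg
  apply Module.projective_of_localization_maximal
  intro P hP
  haveI := hP
  haveI : Module.Finite (Localization.AtPrime P) (LocalizedModule P.primeCompl M) :=
    Module.Finite.of_isLocalizedModule P.primeCompl
      (LocalizedModule.mkLinearMap P.primeCompl M)
  haveI : Module.Free (Localization.AtPrime P) (LocalizedModule P.primeCompl M) := auxFree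
  exact Module.Projective.of_free
end
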